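/- Under the ellipticity and form-bound hypotheses with λ₁ > 0, define D(𝐀) to be the set of u ∈ H¹₀(Ω) with Lu − βu ∈ L²(Ω) (distributionally), where Lu = Σ ∂_i(a_ij ∂_j u), and 𝐀u = −Lu + βu. Then 𝐀 is self-adjoint on L²(Ω) with spectrum contained in [λ₁, ∞) ⊂ (0, ∞). -/

import Mathlib

/-- Abstract form of Proposition 3.4.  `X` stands for `L²(Ω)` and `Y`
for the form domain `H¹₀(Ω)` (with its `H¹`-type norm), included in `X` by the injective
continuous dense embedding `j`.  The symmetric bilinear form
`b u v = ∫ [Σ aᵢⱼ ∂ᵢu ∂ⱼv + β u v]` is continuous and coercive on `Y` (consequences of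
ellipticity and of the form bound on `β`) and satisfies `b u u ≥ λ₁ ‖u‖²_{L²}` with
`λ₁ > 0`.  The operator `𝐀 u = -Lu + βu` is the partial linear map `A` on `X` with domain
`D(A) = {u ∈ H¹₀ : Lu - βu ∈ L²}`, i.e. the set of `j y` for which there is `g ∈ X` with
`b y v = ⟨g, j v⟩_{L²}` for all `v ∈ Y`, and `A (j y) = g` (weak formulation of the
distributional condition).  Then `A` is self-adjoint on `L²(Ω)` and its spectrum is
contained in `[λ₁, ∞) ⊆ (0, ∞)`; for a self-adjoint operator the latter is equivalent to
the lower bound `⟨Au, u⟩ ≥ λ₁ ‖u‖²` on the domain. -/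
theorem divergence_form_operator_selfadjoint_positive
    {X Y : Type*}
    [NormedAddCommGroup X] [InnerProductSpace ℝ X] [CompleteSpace X]
    [NormedAddCommGroup Y] [InnerProductSpace ℝ Y] [CompleteSpace Y]
    (j : Y →L[ℝ] X) (hj_inj : Function.Injective j) (hj_dense : DenseRange j)
    (b : Y →L[ℝ] Y →L[ℝ] ℝ)
    (hbsymm : ∀ u v : Y, b u v = b v u)
    (hbcoercive : ∃ c : ℝ, 0 < c ∧ ∀ u : Y, c * ‖u‖ ^ 2 ≤ b u u)
    (lam₁ : ℝ) (hlam : 0 < lam₁)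
    (hlam₁ : ∀ u : Y, lam₁ * ‖j u‖ ^ 2 ≤ b u u)
    (A : X →ₗ.[ℝ] X)
    (hdom : ∀ x : X, x ∈ A.domain ↔
      ∃ y : Y, j y = x ∧ ∃ g : X, ∀ v : Y, b y v = (inner ℝ g (j v) : ℝ))
    (hA : ∀ (x : A.domain) (y : Y) (g : X), j y = (x : X) →
      (∀ v : Y, b y v = (inner ℝ g (j v) : ℝ)) → A x = g) :
    IsSelfAdjoint A ∧
    ∀ x : A.domain, lam₁ * ‖(x : X)‖ ^ 2 ≤ (inner ℝ (A x) (x : X) : ℝ) := by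
  classical
  -- lower bound on the domain
  have hpos : ∀ x : A.domain, lam₁ * ‖(x : X)‖ ^ 2 ≤ (inner ℝ (A x) (x : X) : ℝ) := by
    intro x
    obtain ⟨y, hy, g, hg⟩ := (hdom x).mp x.2
    have hAx : A x = g := hA x y g hy hg
    calc lam₁ * ‖(x : X)‖ ^ 2 = lam₁ * ‖j y‖ ^ 2 := by rw [hy]
      _ ≤ b y y := hlam₁ y
      _ = (inner ℝ g (j y) : ℝ) := hg y
      _ = (inner ℝ (A x) ((x : X)) : ℝ) := by rw [hAx, hy]
  obtain ⟨c, hc, hcoer⟩ := hbcoercive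
  have hbco : IsCoercive b := by
    refine ⟨c, hc, fun u => ?_⟩
    rw [mul_assoc, ← pow_two]
    exact hcoer u
  -- surjectivity via Lax-Milgram
  have hsurj : ∀ f : X, ∃ x : A.domain, A x = f := by
    intro f
    set ℓ : Y →L[ℝ] ℝ := (innerSL ℝ f).comp j with hℓdef
    set z : Y := (InnerProductSpace.toDual ℝ Y).symm ℓ with hzdef
    set y : Y := hbco.continuousLinearEquivOfBilin.symm z with hydef
    have hy : ∀ v : Y, b y v = (inner ℝ f (j v) : ℝ) := by
      intro v
      have h1 : (inner ℝ (hbco.continuousLinearEquivOfBilin y) v : ℝ) = b y v :=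
        hbco.continuousLinearEquivOfBilin_apply y v
      have h2 : hbco.continuousLinearEquivOfBilin y = z := by
        rw [hydef]; exact hbco.continuousLinearEquivOfBilin.apply_symm_apply z
      have h3 : (inner ℝ z v : ℝ) = ℓ v := InnerProductSpace.toDual_symm_apply
      rw [h2, h3] at h1
      rw [← h1, hℓdef]
      simp
    have hmem : j y ∈ A.domain := (hdom (j y)).mpr ⟨y, rfl, f, hy⟩
    exact ⟨⟨j y, hmem⟩, hA ⟨j y, hmem⟩ y f rfl hy⟩
  -- symmetry
  have hsymmA : ∀ x x' : A.domain,
      (inner ℝ (A x) ((x' : X)) : ℝ) = (inner ℝ ((x : X)) (A x') : ℝ) := by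
    intro x x'
    obtain ⟨y, hy, g, hg⟩ := (hdom x).mp x.2
    obtain ⟨y', hy', g', hg'⟩ := (hdom x').mp x'.2
    rw [hA x y g hy hg, hA x' y' g' hy' hg']
    calc (inner ℝ g ((x' : X)) : ℝ) = (inner ℝ g (j y') : ℝ) := by rw [hy']
      _ = b y y' := (hg y').symm
      _ = b y' y := hbsymm y y'
      _ = (inner ℝ g' (j y) : ℝ) := hg' y
      _ = (inner ℝ ((x : X)) g' : ℝ) := by rw [hy, real_inner_comm]
  have hzero : ∀ x : A.domain, (inner ℝ (A x) ((x : X)) : ℝ) ≤ 0 → (x : X) = 0 := by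
    intro x hneg
    have h1 := hpos x
    have h2 : ‖(x : X)‖ ^ 2 ≤ 0 := by nlinarith
    have h3 : ‖(x : X)‖ ^ 2 = 0 := le_antisymm h2 (sq_nonneg _)
    exact norm_eq_zero.mp (sq_eq_zero_iff.mp h3)
  -- dense domain
  have hdense : Dense (A.domain : Set X) := by
    rw [Submodule.dense_iff_topologicalClosure_eq_top,
      Submodule.topologicalClosure_eq_top_iff, Submodule.eq_bot_iff]
    intro w hw
    obtain ⟨x, hx⟩ := hsurj w
    have h0 : (inner ℝ ((x : X)) w : ℝ) = 0 :=
      (Submodule.mem_orthogonal _ w).mp hw (x : X) x.2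
    have hx0 : (x : X) = 0 := by
      refine hzero x ?_
      rw [hx, real_inner_comm, h0]
    have hx0' : x = 0 := Subtype.ext hx0
    rw [← hx, hx0', A.map_zero]
  -- A is a formal adjoint of itself
  have hform : A.IsFormalAdjoint A := fun x x' => hsymmA x x'
  have hle1 : A ≤ A.adjoint := LinearPMap.IsFormalAdjoint.le_adjoint hdense hform
  have hformadj : A.adjoint.IsFormalAdjoint A := A.adjoint_isFormalAdjoint hdense
  -- key: every element of the adjoint domain lies in the domain with matching value
  have hkey : ∀ xs : A.adjoint.domain, ∃ u : A.domain,
      ((u : X)) = ((xs : X)) ∧ A u = A.adjoint xs := by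
    intro xs
    obtain ⟨u, hu⟩ := hsurj (A.adjoint xs)
    refine ⟨u, ?_, hu⟩
    have horth : ∀ x : A.domain, (inner ℝ (A x) (((xs : X)) - (u : X)) : ℝ) = 0 := by
      intro x
      have h1 : (inner ℝ (A.adjoint xs) ((x : X)) : ℝ) = inner ℝ ((xs : X)) (A x) :=
        hformadj xs x
      have h2 : (inner ℝ (A x) ((xs : X)) : ℝ) = inner ℝ (A x) ((u : X)) :=
        calc (inner ℝ (A x) ((xs : X)) : ℝ) = inner ℝ ((xs : X)) (A x) := real_inner_comm _ _
          _ = inner ℝ (A.adjoint xs) ((x : X)) := h1.symm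
          _ = inner ℝ (A u) ((x : X)) := by rw [hu]
          _ = inner ℝ ((u : X)) (A x) := hsymmA u x
          _ = inner ℝ (A x) ((u : X)) := real_inner_comm _ _
      rw [inner_sub_right, h2, sub_self]
    obtain ⟨x, hxval⟩ := hsurj (((xs : X)) - (u : X))
    have := horth x
    rw [hxval] at this
    have hsub : ((xs : X)) - (u : X) = 0 := inner_self_eq_zero.mp this
    exact (sub_eq_zero.mp hsub).symm
  have hle2 : A.adjoint ≤ A := by
    constructor
    · intro xv hxv
      obtain ⟨u, hu1, _⟩ := hkey ⟨xv, hxv⟩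
      simpa [hu1] using u.2
    · intro xs y hxy
      obtain ⟨u, hu1, hu2⟩ := hkey xs
      have : y = u := Subtype.ext (by rw [← hxy, hu1])
      rw [this, hu2]
  have hsa : IsSelfAdjoint A := le_antisymm hle2 hle1
  exact ⟨hsa, hpos⟩
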